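/- Let M_ε, M_μ be symmetric positive definite matrices, C a real matrix, λ_M the largest eigenvalue of C M_ε⁻¹ Cᵀ u = λ M_μ u, and Δt > 0 with Δt < 2/√λ_M. Then every solution of the leap-frog recursion e^{q+1} = e^q + Δt M_ε⁻¹ Cᵀ h^{q+1/2}, h^{q+1/2} = h^{q−1/2} − Δt M_μ⁻¹ C e^q remains bounded uniformly in q; equivalently, the one-step iteration matrix of the leap-frog scheme is power-bounded. -/

import Mathlib

open Matrix
open scoped MatrixOrder


-- Cauchy-Schwarz for dotProduct
lemma dotCS {n : ℕ} (v w : Fin n → ℝ) : (v ⬝ᵥ w) ^ 2 ≤ (v ⬝ᵥ v) * (w ⬝ᵥ w) := by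
  simpa [dotProduct, pow_two, mul_mul_mul_comm] using
    Finset.sum_mul_sq_le_sq_mul_sq Finset.univ v w

lemma dot_nonneg' {n : ℕ} (v : Fin n → ℝ) : 0 ≤ v ⬝ᵥ v :=
  Finset.sum_nonneg fun i _ => mul_self_nonneg _

-- spectral bound
lemma quad_bound {n : ℕ} (T : Matrix (Fin n) (Fin n) ℝ) (hT : T.IsHermitian) (lam : ℝ)
    (hb : ∀ (μ : ℝ) (v : Fin n → ℝ), v ≠ 0 → T *ᵥ v = μ • v → μ ≤ lam) (y : Fin n → ℝ) :
    y ⬝ᵥ (T *ᵥ y) ≤ lam * (y ⬝ᵥ y) := by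
  classical
  set b := hT.eigenvectorBasis with hbdef
  have hsym : ∀ (v w : Fin n → ℝ), v ⬝ᵥ (T *ᵥ w) = (T *ᵥ v) ⬝ᵥ w := by
    intro v w
    have ht : Tᵀ = T := by rw [← conjTranspose_eq_transpose_of_trivial]; exact hT
    rw [dotProduct_mulVec, ← mulVec_transpose, ht]
  have hinner : ∀ x z : EuclideanSpace ℝ (Fin n), (inner ℝ x z : ℝ) = (x : Fin n → ℝ) ⬝ᵥ (z : Fin n → ℝ) := by
    intro x z
    simp [PiLp.inner_apply, RCLike.inner_apply, dotProduct, mul_comm]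
  have heig : ∀ i, hT.eigenvalues i ≤ lam := by
    intro i
    refine hb _ _ ?_ (hT.mulVec_eigenvectorBasis i)
    intro h0
    have hni := b.orthonormal.1 i
    have : (b i : EuclideanSpace ℝ (Fin n)) = 0 := by simpa using congrArg (WithLp.toLp 2) h0
    rw [this] at hni
    simp at hni
  have key := b.sum_inner_mul_inner (WithLp.toLp 2 y : EuclideanSpace ℝ (Fin n)) (WithLp.toLp 2 (T *ᵥ y) : EuclideanSpace ℝ (Fin n))
  have key2 := b.sum_inner_mul_inner (WithLp.toLp 2 y : EuclideanSpace ℝ (Fin n)) (WithLp.toLp 2 y : EuclideanSpace ℝ (Fin n))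
  rw [hinner] at key key2
  simp only [WithLp.ofLp_toLp] at key key2
  rw [← key, ← key2, Finset.mul_sum]
  apply Finset.sum_le_sum
  intro i _
  rw [hinner, hinner, hinner]
  simp only [WithLp.ofLp_toLp]
  have h2 : T *ᵥ (b i : Fin n → ℝ) = hT.eigenvalues i • (b i : Fin n → ℝ) :=
    hT.mulVec_eigenvectorBasis i
  have h1 : (b i : Fin n → ℝ) ⬝ᵥ (T *ᵥ y) = hT.eigenvalues i * ((b i : Fin n → ℝ) ⬝ᵥ y) := by
    rw [hsym, h2, smul_dotProduct, smul_eq_mul]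
  rw [h1]
  have h3 : (0:ℝ) ≤ (y ⬝ᵥ (b i : Fin n → ℝ)) * ((b i : Fin n → ℝ) ⬝ᵥ y) := by
    rw [dotProduct_comm]; exact mul_self_nonneg _
  nlinarith [heig i, h3]

lemma norm_mulVec_bound {m n : ℕ} (A : Matrix (Fin m) (Fin n) ℝ) :
    ∃ c : ℝ, 0 ≤ c ∧ ∀ v : Fin n → ℝ, ‖A *ᵥ v‖ ≤ c * Real.sqrt (v ⬝ᵥ v) := by
  refine ⟨∑ i, ∑ j, |A i j|, by positivity, fun v => ?_⟩
  have hv : ∀ j, |v j| ≤ Real.sqrt (v ⬝ᵥ v) := by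
    intro j
    rw [← Real.sqrt_sq_eq_abs]
    apply Real.sqrt_le_sqrt
    have h1 := Finset.single_le_sum (f := fun k => v k * v k)
      (fun k _ => mul_self_nonneg _) (Finset.mem_univ j)
    simpa [dotProduct, pow_two] using h1
  rw [show (∑ i, ∑ j, |A i j|) * Real.sqrt (v ⬝ᵥ v)
      = ∑ i, (∑ j, |A i j|) * Real.sqrt (v ⬝ᵥ v) by rw [Finset.sum_mul]] at *
  apply pi_norm_le_iff_of_nonneg (by positivity) |>.2
  intro i
  have hrow : ‖(A *ᵥ v) i‖ ≤ (∑ j, |A i j|) * Real.sqrt (v ⬝ᵥ v) := by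
    rw [Real.norm_eq_abs, Finset.sum_mul]
    calc |(A *ᵥ v) i| = |∑ j, A i j * v j| := rfl
      _ ≤ ∑ j, |A i j * v j| := Finset.abs_sum_le_sum_abs _ _
      _ ≤ ∑ j, |A i j| * Real.sqrt (v ⬝ᵥ v) := by
          apply Finset.sum_le_sum
          intro j _
          rw [abs_mul]
          exact mul_le_mul_of_nonneg_left (hv j) (abs_nonneg _)
  refine hrow.trans ?_
  apply Finset.single_le_sum (f := fun i => (∑ j, |A i j|) * Real.sqrt (v ⬝ᵥ v))
    (fun k _ => by positivity) (Finset.mem_univ i)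

lemma energy_step {nn mm : ℕ} (K : Matrix (Fin nn) (Fin mm) ℝ) (t : ℝ)
    (a' : Fin nn → ℝ) (b : Fin mm → ℝ) :
    a' ⬝ᵥ (a' + t • (K *ᵥ (b - t • (Kᵀ *ᵥ a')))) + (b - t • (Kᵀ *ᵥ a')) ⬝ᵥ (b - t • (Kᵀ *ᵥ a'))
      = (a' - t • (K *ᵥ b)) ⬝ᵥ a' + b ⬝ᵥ b := by
  have adj : ∀ (p : Fin nn → ℝ) (q : Fin mm → ℝ), (Kᵀ *ᵥ p) ⬝ᵥ q = p ⬝ᵥ (K *ᵥ q) := by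
    intro p q; rw [mulVec_transpose, ← dotProduct_mulVec]
  set u := Kᵀ *ᵥ a' with hu
  have c1 : a' ⬝ᵥ (K *ᵥ b) = u ⬝ᵥ b := (adj a' b).symm
  have c2 : a' ⬝ᵥ (K *ᵥ u) = u ⬝ᵥ u := (adj a' u).symm
  have c3 : (K *ᵥ b) ⬝ᵥ a' = u ⬝ᵥ b := by rw [dotProduct_comm, c1]
  have c4 : b ⬝ᵥ u = u ⬝ᵥ b := dotProduct_comm _ _
  simp only [mulVec_sub, mulVec_smul, dotProduct_add, dotProduct_sub, sub_dotProduct,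
    add_dotProduct, dotProduct_smul, smul_dotProduct, smul_eq_mul, smul_sub]
  rw [c1, c2, c3, c4]
  ring

/-- CFL stability of the leap-frog scheme: if `Δt < 2/√λ_M`, where `λ_M` is the
largest eigenvalue of the generalized eigenvalue problem
`C Mε⁻¹ Cᵀ u = λ Mμ u`, then every solution of the leap-frog recursion
stays bounded uniformly in the step index. -/
theorem dcm_leapfrog_cfl_stability
    {N Nt : ℕ}
    (Mε : Matrix (Fin N) (Fin N) ℝ) (Mμ : Matrix (Fin Nt) (Fin Nt) ℝ)
    (hMε : Mε.PosDef) (hMεsymm : Mε.IsSymm)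
    (hMμ : Mμ.PosDef) (hMμsymm : Mμ.IsSymm)
    (C : Matrix (Fin Nt) (Fin N) ℝ)
    (lamM : ℝ)
    -- `lamM` is an eigenvalue of the pencil:
    (hlamM_eig : ∃ u : Fin Nt → ℝ, u ≠ 0 ∧
      (C * Mε⁻¹ * Cᵀ) *ᵥ u = lamM • (Mμ *ᵥ u))
    -- and it is the largest one:
    (hlamM_max : ∀ (lam : ℝ) (u : Fin Nt → ℝ), u ≠ 0 →
      (C * Mε⁻¹ * Cᵀ) *ᵥ u = lam • (Mμ *ᵥ u) → lam ≤ lamM)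
    (Δt : ℝ) (hΔt : 0 < Δt) (hCFL : Δt < 2 / Real.sqrt lamM)
    -- leap-frog iterates: `e q ≈ e(q Δt)`, `h q ≈ h((q+1/2) Δt)`
    (e : ℕ → (Fin N → ℝ)) (h : ℕ → (Fin Nt → ℝ))
    (he : ∀ q, e (q + 1) = e q + Δt • (Mε⁻¹ *ᵥ (Cᵀ *ᵥ h q)))
    (hh : ∀ q, h (q + 1) = h q - Δt • (Mμ⁻¹ *ᵥ (C *ᵥ e (q + 1)))) :
    ∃ M : ℝ, ∀ q : ℕ, ‖e q‖ + ‖h q‖ ≤ M := by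
  classical
  set s := Real.sqrt lamM with hs_def
  have hs : 0 < s := by
    by_contra hns
    push_neg at hns
    have h0 : s = 0 := le_antisymm hns (hs_def ▸ Real.sqrt_nonneg lamM)
    rw [h0] at hCFL
    simp at hCFL
    linarith
  have hlam : lamM = s ^ 2 := by
    have hl0 : 0 < lamM := Real.sqrt_pos.mp hs
    rw [hs_def, Real.sq_sqrt hl0.le]
  have hts : Δt * s < 2 := (lt_div_iff₀ hs).mp hCFL
  clear hCFL hs_def
  clear_value s
  -- square roots of the mass matrices
  set P := CFC.sqrt Mε with hP_def
  set R := CFC.sqrt Mμ with hR_def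
  have hPP : P * P = Mε := CFC.sqrt_mul_sqrt_self Mε hMε.posSemidef.nonneg
  have hRR : R * R = Mμ := CFC.sqrt_mul_sqrt_self Mμ hMμ.posSemidef.nonneg
  have hPsymm : Pᵀ = P := by
    rw [← conjTranspose_eq_transpose_of_trivial]
    exact (CFC.sqrt_nonneg Mε).posSemidef.1
  have hRsymm : Rᵀ = R := by
    rw [← conjTranspose_eq_transpose_of_trivial]
    exact (CFC.sqrt_nonneg Mμ).posSemidef.1
  have hPdet : IsUnit P.det := by
    have h2 : P.det * P.det = Mε.det := by rw [← det_mul, hPP]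
    refine isUnit_iff_ne_zero.mpr fun h0 => ?_
    rw [h0, mul_zero] at h2
    exact (ne_of_gt hMε.det_pos) h2.symm
  have hRdet : IsUnit R.det := by
    have h2 : R.det * R.det = Mμ.det := by rw [← det_mul, hRR]
    refine isUnit_iff_ne_zero.mpr fun h0 => ?_
    rw [h0, mul_zero] at h2
    exact (ne_of_gt hMμ.det_pos) h2.symm
  clear hP_def hR_def
  clear_value P R
  have hPinv : P⁻¹ * P = 1 := nonsing_inv_mul P hPdet
  have hPinv' : P * P⁻¹ = 1 := mul_nonsing_inv P hPdet
  have hRinv : R⁻¹ * R = 1 := nonsing_inv_mul R hRdet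
  have hRinv' : R * R⁻¹ = 1 := mul_nonsing_inv R hRdet
  have hPis : (P⁻¹)ᵀ = P⁻¹ := by rw [transpose_nonsing_inv, hPsymm]
  have hRis : (R⁻¹)ᵀ = R⁻¹ := by rw [transpose_nonsing_inv, hRsymm]
  have hMεi : Mε⁻¹ = P⁻¹ * P⁻¹ := by rw [← hPP, Matrix.mul_inv_rev]
  have hMμi : Mμ⁻¹ = R⁻¹ * R⁻¹ := by rw [← hRR, Matrix.mul_inv_rev]
  set K := P⁻¹ * Cᵀ * R⁻¹ with hK_def
  have hKt : Kᵀ = R⁻¹ * C * P⁻¹ := by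
    rw [hK_def, Matrix.transpose_mul, Matrix.transpose_mul, transpose_transpose, hPis, hRis,
      Matrix.mul_assoc]
  have hM1 : P * Mε⁻¹ * Cᵀ = K * R := by
    rw [hMεi, ← Matrix.mul_assoc, hPinv', Matrix.one_mul, hK_def, Matrix.mul_assoc, hRinv,
      Matrix.mul_one]
  have hM2 : R * Mμ⁻¹ * C = Kᵀ * P := by
    rw [hMμi, ← Matrix.mul_assoc, hRinv', Matrix.one_mul, hKt, Matrix.mul_assoc, hPinv,
      Matrix.mul_one]
  set x : ℕ → Fin N → ℝ := fun q => P *ᵥ e q with hx_def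
  set y : ℕ → Fin Nt → ℝ := fun q => R *ᵥ h q with hy_def
  have hx : ∀ q, x (q + 1) = x q + Δt • (K *ᵥ y q) := by
    intro q
    simp only [hx_def, hy_def]
    rw [he q, mulVec_add, mulVec_smul]
    simp only [mulVec_mulVec]
    rw [← Matrix.mul_assoc, hM1]
  have hy : ∀ q, y (q + 1) = y q - Δt • (Kᵀ *ᵥ x (q + 1)) := by
    intro q
    simp only [hx_def, hy_def]
    rw [hh q, mulVec_sub, mulVec_smul]
    simp only [mulVec_mulVec]
    rw [← Matrix.mul_assoc, hM2]
  have hex : ∀ q, e q = P⁻¹ *ᵥ x q := by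
    intro q
    simp only [hx_def]; rw [mulVec_mulVec, hPinv, one_mulVec]
  have hhy : ∀ q, h q = R⁻¹ *ᵥ y q := by
    intro q
    simp only [hy_def]; rw [mulVec_mulVec, hRinv, one_mulVec]
  -- spectral bound for K
  have hTH : (Kᵀ * K).IsHermitian := by
    have h' := isHermitian_conjTranspose_mul_self K
    rwa [conjTranspose_eq_transpose_of_trivial] at h'
  have hTeig : ∀ (μ : ℝ) (v : Fin Nt → ℝ), v ≠ 0 → (Kᵀ * K) *ᵥ v = μ • v → μ ≤ lamM := by
    intro μ v hv hEv
    have hRv : R *ᵥ (R⁻¹ *ᵥ v) = v := by rw [mulVec_mulVec, hRinv', one_mulVec]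
    have hune : R⁻¹ *ᵥ v ≠ 0 := by
      intro h0; apply hv; rw [← hRv, h0, mulVec_zero]
    apply hlamM_max μ (R⁻¹ *ᵥ v) hune
    have hSmat : (C * Mε⁻¹ * Cᵀ) * R⁻¹ = R * (Kᵀ * K) := by
      rw [hMεi, hKt, hK_def]
      simp only [Matrix.mul_assoc]
      rw [← Matrix.mul_assoc R R⁻¹, hRinv', Matrix.one_mul]
    have hMμmat : Mμ * R⁻¹ = R := by rw [← hRR, Matrix.mul_assoc, hRinv', Matrix.mul_one]
    calc (C * Mε⁻¹ * Cᵀ) *ᵥ (R⁻¹ *ᵥ v) = ((C * Mε⁻¹ * Cᵀ) * R⁻¹) *ᵥ v := by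
          rw [mulVec_mulVec]
      _ = (R * (Kᵀ * K)) *ᵥ v := by rw [hSmat]
      _ = R *ᵥ ((Kᵀ * K) *ᵥ v) := by rw [← mulVec_mulVec]
      _ = R *ᵥ (μ • v) := by rw [hEv]
      _ = μ • (R *ᵥ v) := mulVec_smul R μ v
      _ = μ • (Mμ *ᵥ (R⁻¹ *ᵥ v)) := by rw [mulVec_mulVec, hMμmat]
  have hquad := quad_bound (Kᵀ * K) hTH lamM hTeig
  have adj : ∀ (p : Fin N → ℝ) (q : Fin Nt → ℝ), (Kᵀ *ᵥ p) ⬝ᵥ q = p ⬝ᵥ (K *ᵥ q) := by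
    intro p q; rw [mulVec_transpose, ← dotProduct_mulVec]
  have hKbound : ∀ w : Fin Nt → ℝ, (K *ᵥ w) ⬝ᵥ (K *ᵥ w) ≤ s ^ 2 * (w ⬝ᵥ w) := by
    intro w
    have h1 : w ⬝ᵥ ((Kᵀ * K) *ᵥ w) = (K *ᵥ w) ⬝ᵥ (K *ᵥ w) := by
      rw [← mulVec_mulVec, dotProduct_comm, adj]
    rw [← h1, ← hlam]
    exact hquad w
  -- energy conservation
  have hestep : ∀ q, x (q + 1) ⬝ᵥ x (q + 2) + y (q + 1) ⬝ᵥ y (q + 1)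
      = x q ⬝ᵥ x (q + 1) + y q ⬝ᵥ y q := by
    intro q
    have e1 := energy_step K Δt (x (q + 1)) (y q)
    rw [← hy q, ← hx (q + 1)] at e1
    have e2 : x (q + 1) - Δt • (K *ᵥ y q) = x q := by rw [hx q]; abel
    rw [e2] at e1
    exact e1
  clear hx_def hy_def hK_def he hh hM1 hM2 hKt hMεi hMμi hPP hRR hPinv hPinv' hRinv' hPsymm
    hRsymm hPis hRis hTH hTeig hquad hlamM_max hlamM_eig hMεsymm hMμsymm
  clear_value K x y
  set En : ℕ → ℝ := fun q => x q ⬝ᵥ x (q + 1) + y q ⬝ᵥ y q with hEn_def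
  have hEconst : ∀ q, En q = En 0 := by
    intro q
    induction q with
    | zero => rfl
    | succ n ih => rw [← ih]; exact hestep n
  -- cross term estimate
  have hcross : ∀ (a : Fin N → ℝ) (bb : Fin Nt → ℝ),
      -(s / 2) * (a ⬝ᵥ a + bb ⬝ᵥ bb) ≤ a ⬝ᵥ (K *ᵥ bb) := by
    intro a bb
    have hcs := dotCS a (K *ᵥ bb)
    have hKb := hKbound bb
    have ha := dot_nonneg' a
    have hbn := dot_nonneg' bb
    have hd2 : (a ⬝ᵥ (K *ᵥ bb)) ^ 2 ≤ s ^ 2 * ((a ⬝ᵥ a) * (bb ⬝ᵥ bb)) := by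
      nlinarith [mul_le_mul_of_nonneg_left hKb ha]
    have hB : (0:ℝ) ≤ s * (a ⬝ᵥ a + bb ⬝ᵥ bb) / 2 := by positivity
    nlinarith [sq_nonneg (a ⬝ᵥ (K *ᵥ bb) + s * (a ⬝ᵥ a + bb ⬝ᵥ bb) / 2),
      sq_nonneg (a ⬝ᵥ a - bb ⬝ᵥ bb), hB]
  set δ := 1 - Δt * s / 2 with hδ_def
  have hδ : 0 < δ := by rw [hδ_def]; linarith
  have hEn_lower : ∀ q, δ * (x q ⬝ᵥ x q + y q ⬝ᵥ y q) ≤ En q := by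
    intro q
    have hEq : En q = x q ⬝ᵥ x q + Δt * (x q ⬝ᵥ (K *ᵥ y q)) + y q ⬝ᵥ y q := by
      simp only [hEn_def]
      rw [hx q, dotProduct_add, dotProduct_smul, smul_eq_mul]
    rw [hEq, hδ_def]
    have hc := mul_le_mul_of_nonneg_left (hcross (x q) (y q)) hΔt.le
    nlinarith [hc]
  have hEn0nn : 0 ≤ En 0 :=
    le_trans (mul_nonneg hδ.le (add_nonneg (dot_nonneg' (x 0)) (dot_nonneg' (y 0))))
      (hEn_lower 0)
  have hbound : ∀ q, x q ⬝ᵥ x q ≤ En 0 / δ ∧ y q ⬝ᵥ y q ≤ En 0 / δ := by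
    intro q
    have h1 := hEn_lower q
    rw [hEconst q] at h1
    have hX := dot_nonneg' (x q)
    have hY := dot_nonneg' (y q)
    constructor
    · rw [le_div_iff₀ hδ]; nlinarith [mul_nonneg hδ.le hY]
    · rw [le_div_iff₀ hδ]; nlinarith [mul_nonneg hδ.le hX]
  have hEn0 : 0 ≤ En 0 / δ := div_nonneg hEn0nn hδ.le
  obtain ⟨cP, hcP0, hcP⟩ := norm_mulVec_bound (P⁻¹)
  obtain ⟨cR, hcR0, hcR⟩ := norm_mulVec_bound (R⁻¹)
  refine ⟨(cP + cR) * Real.sqrt (En 0 / δ), fun q => ?_⟩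
  have h1 : ‖e q‖ ≤ cP * Real.sqrt (En 0 / δ) := by
    rw [hex q]
    refine (hcP (x q)).trans ?_
    exact mul_le_mul_of_nonneg_left (Real.sqrt_le_sqrt (hbound q).1) hcP0
  have h2 : ‖h q‖ ≤ cR * Real.sqrt (En 0 / δ) := by
    rw [hhy q]
    refine (hcR (y q)).trans ?_
    exact mul_le_mul_of_nonneg_left (Real.sqrt_le_sqrt (hbound q).2) hcR0
  have hsq : 0 ≤ Real.sqrt (En 0 / δ) := Real.sqrt_nonneg _
  nlinarith [h1, h2]
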